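/- arXiv:2508.05437 — 3 statements merged into one kernel-verified Lean document; each statement's English description precedes it below -/
import Mathlib

section
/- For a directed graph G with semi-double cover H, and any two disjoint subsets A, B of the vertices of G, the flow ratio f_G(A,B) = 1 - \overline{\phi}_G(A,B) equals the conductance \phi_H(A_1 \cup B_2) in H, where A_1 = {v_1 : v \in A} and B_2 = {v_2 : v \in B}. -/
open Finset

/-- Weight function of the semi-double cover of a directed weighted graph:
each directed edge `(u,v)` of weight `w u v` becomes the undirected edge
`{u₁, v₂}` of the same weight. -/
def coverW {V : Type*} (w : V → V → ℝ) : V ⊕ V → V ⊕ V → ℝ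
  | Sum.inl u, Sum.inr v => w u v
  | Sum.inr v, Sum.inl u => w u v
  | _, _ => 0

lemma coverW_inl_inl {V : Type*} (w : V → V → ℝ) (u v : V) :
    coverW w (Sum.inl u) (Sum.inl v) = 0 := rfl

lemma coverW_inr_inr {V : Type*} (w : V → V → ℝ) (u v : V) :
    coverW w (Sum.inr u) (Sum.inr v) = 0 := rfl

lemma sum_union_images {V : Type*} [Fintype V] [DecidableEq V]
    (A B : Finset V) (f : V ⊕ V → ℝ) :
    ∑ a ∈ A.image Sum.inl ∪ B.image Sum.inr, f a
      = (∑ u ∈ A, f (Sum.inl u)) + ∑ v ∈ B, f (Sum.inr v) := by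
  rw [Finset.sum_union, Finset.sum_image (fun a _ b _ h => Sum.inl_injective h),
    Finset.sum_image (fun a _ b _ h => Sum.inr_injective h)]
  simp [Finset.disjoint_left]

lemma compl_union_images {V : Type*} [Fintype V] [DecidableEq V]
    (A B : Finset V) :
    (A.image Sum.inl ∪ B.image Sum.inr)ᶜ = Aᶜ.image Sum.inl ∪ Bᶜ.image Sum.inr := by
  ext x
  cases x <;> simp

/-- For a directed graph `G` (with nonnegative weights `w`) and disjoint nonempty
vertex sets `A, B`, the flow ratio `f_G(A,B) = 1 - \overline{φ}_G(A,B)` equals the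
conductance `φ_H(A₁ ∪ B₂)` in the semi-double cover `H`. -/
theorem flow_ratio_eq_cover_conductance
    {V : Type*} [Fintype V] [DecidableEq V]
    (w : V → V → ℝ) (hw : ∀ u v, 0 ≤ w u v)
    (A B : Finset V) (hAB : Disjoint A B) (hA : A.Nonempty) (hB : B.Nonempty)
    (hvol : 0 < (∑ u ∈ A, ∑ v, w u v) + ∑ v ∈ B, ∑ u, w u v) :
    1 - 2 * (∑ u ∈ A, ∑ v ∈ B, w u v) /
        ((∑ u ∈ A, ∑ v, w u v) + ∑ v ∈ B, ∑ u, w u v) =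
      (∑ a ∈ A.image Sum.inl ∪ B.image Sum.inr,
          ∑ b ∈ (A.image Sum.inl ∪ B.image Sum.inr)ᶜ, coverW w a b) /
        (∑ a ∈ A.image Sum.inl ∪ B.image Sum.inr, ∑ b, coverW w a b) := by
  set D := (∑ u ∈ A, ∑ v, w u v) + ∑ v ∈ B, ∑ u, w u v with hD
  set W := ∑ u ∈ A, ∑ v ∈ B, w u v with hW
  have hdenom : (∑ a ∈ A.image Sum.inl ∪ B.image Sum.inr, ∑ b, coverW w a b) = D := by
    rw [sum_union_images]
    congr 1
    · apply Finset.sum_congr rfl; intro u _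
      rw [Fintype.sum_sum_type]
      simp [coverW]
    · apply Finset.sum_congr rfl; intro v _
      rw [Fintype.sum_sum_type]
      simp [coverW]
  have hcut : (∑ a ∈ A.image Sum.inl ∪ B.image Sum.inr,
      ∑ b ∈ (A.image Sum.inl ∪ B.image Sum.inr)ᶜ, coverW w a b) = D - 2 * W := by
    rw [compl_union_images, sum_union_images]
    have h1 : ∀ u, ∑ b ∈ Aᶜ.image Sum.inl ∪ Bᶜ.image Sum.inr,
        coverW w (Sum.inl u) b = ∑ v ∈ Bᶜ, w u v := by
      intro u
      rw [sum_union_images]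
      simp [coverW]
    have h2 : ∀ v, ∑ b ∈ Aᶜ.image Sum.inl ∪ Bᶜ.image Sum.inr,
        coverW w (Sum.inr v) b = ∑ u ∈ Aᶜ, w u v := by
      intro v
      rw [sum_union_images]
      simp [coverW]
    simp only [h1, h2]
    have e1 : ∑ u ∈ A, ∑ v ∈ Bᶜ, w u v
        = (∑ u ∈ A, ∑ v, w u v) - ∑ u ∈ A, ∑ v ∈ B, w u v := by
      rw [← Finset.sum_sub_distrib]
      apply Finset.sum_congr rfl; intro u _
      rw [eq_sub_iff_add_eq, Finset.sum_compl_add_sum]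
    have e2 : ∑ v ∈ B, ∑ u ∈ Aᶜ, w u v
        = (∑ v ∈ B, ∑ u, w u v) - ∑ v ∈ B, ∑ u ∈ A, w u v := by
      rw [← Finset.sum_sub_distrib]
      apply Finset.sum_congr rfl; intro v _
      rw [eq_sub_iff_add_eq, Finset.sum_compl_add_sum]
    rw [e1, e2, Finset.sum_comm (s := B) (t := A)]
    ring
  rw [hdenom, hcut]
  field_simp
end

section
/- For a directed graph G with semi-double cover H, and any simple set S \subseteq V_H (i.e., |{v_1, v_2} \cap S| \le 1 for all v), setting A = {u : u_1 \in S} and B = {u : u_2 \in S}, it holds that f_G(A,B) = \phi_H(S). -/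
open Finset

/-- A subset `S` of the vertex set of the semi-double cover is simple if it
contains at most one of `v₁, v₂` for every vertex `v` of `G`. -/
def SimpleSet {V : Type*} (S : Finset (V ⊕ V)) : Prop :=
  ∀ v : V, ¬(Sum.inl v ∈ S ∧ Sum.inr v ∈ S)

lemma sum_over_S {V : Type*} [Fintype V] [DecidableEq V]
    (S : Finset (V ⊕ V)) (f : V ⊕ V → ℝ) :
    ∑ a ∈ S, f a =
      (∑ u ∈ Finset.univ.filter (fun u => Sum.inl u ∈ S), f (Sum.inl u)) +
      ∑ v ∈ Finset.univ.filter (fun v => Sum.inr v ∈ S), f (Sum.inr v) := by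
  have h : ∑ a ∈ S, f a = ∑ a, if a ∈ S then f a else 0 := by
    rw [Finset.sum_ite_mem, Finset.univ_inter]
  rw [h, Fintype.sum_sum_type, Finset.sum_filter, Finset.sum_filter]

/-- For a directed graph `G` with semi-double cover `H` and a simple set `S ⊆ V_H`,
setting `A = {u : u₁ ∈ S}` and `B = {u : u₂ ∈ S}`, the flow ratio `f_G(A,B)`
equals the conductance `φ_H(S)`. -/
theorem flow_ratio_of_simple_set
    {V : Type*} [Fintype V] [DecidableEq V]
    (w : V → V → ℝ) (hw : ∀ u v, 0 ≤ w u v)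
    (S : Finset (V ⊕ V)) (hS : SimpleSet S)
    (hvol : 0 < ∑ a ∈ S, ∑ b, coverW w a b) :
    1 - 2 * (∑ u ∈ Finset.univ.filter (fun u => Sum.inl u ∈ S),
               ∑ v ∈ Finset.univ.filter (fun v => Sum.inr v ∈ S), w u v) /
        ((∑ u ∈ Finset.univ.filter (fun u => Sum.inl u ∈ S), ∑ v, w u v) +
          ∑ v ∈ Finset.univ.filter (fun v => Sum.inr v ∈ S), ∑ u, w u v) =
      (∑ a ∈ S, ∑ b ∈ Sᶜ, coverW w a b) / (∑ a ∈ S, ∑ b, coverW w a b) := by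
  set A := Finset.univ.filter (fun u => Sum.inl u ∈ S) with hA
  set B := Finset.univ.filter (fun v => Sum.inr v ∈ S) with hB
  -- volume identity
  have hrowl : ∀ u : V, ∑ b, coverW w (Sum.inl u) b = ∑ v, w u v := by
    intro u
    rw [Fintype.sum_sum_type]
    simp [coverW]
  have hrowr : ∀ v : V, ∑ b, coverW w (Sum.inr v) b = ∑ u, w u v := by
    intro v
    rw [Fintype.sum_sum_type]
    simp [coverW]
  have hD : ∑ a ∈ S, ∑ b, coverW w a b =
      (∑ u ∈ A, ∑ v, w u v) + ∑ v ∈ B, ∑ u, w u v := by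
    rw [sum_over_S S (fun a => ∑ b, coverW w a b)]
    simp only [hrowl, hrowr]
    rfl
  -- internal weight identity
  have hrowSl : ∀ u : V, ∑ b ∈ S, coverW w (Sum.inl u) b = ∑ v ∈ B, w u v := by
    intro u
    rw [sum_over_S S (fun b => coverW w (Sum.inl u) b)]
    simp [coverW]
    rfl
  have hrowSr : ∀ v : V, ∑ b ∈ S, coverW w (Sum.inr v) b = ∑ u ∈ A, w u v := by
    intro v
    rw [sum_over_S S (fun b => coverW w (Sum.inr v) b)]
    simp [coverW]
    rfl
  have hW : ∑ a ∈ S, ∑ b ∈ S, coverW w a b = 2 * ∑ u ∈ A, ∑ v ∈ B, w u v := by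
    rw [sum_over_S S (fun a => ∑ b ∈ S, coverW w a b)]
    simp only [hrowSl, hrowSr]
    rw [Finset.sum_comm (s := B) (t := A)]
    ring
  -- cut identity
  have hcut : ∑ a ∈ S, ∑ b ∈ Sᶜ, coverW w a b =
      (∑ a ∈ S, ∑ b, coverW w a b) - ∑ a ∈ S, ∑ b ∈ S, coverW w a b := by
    rw [← Finset.sum_sub_distrib]
    refine Finset.sum_congr rfl fun a _ => ?_
    rw [eq_sub_iff_add_eq, add_comm, Finset.sum_add_sum_compl]
  have hDne : ((∑ u ∈ A, ∑ v, w u v) + ∑ v ∈ B, ∑ u, w u v) ≠ 0 := by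
    rw [← hD]; exact ne_of_gt hvol
  rw [hcut, hW, hD]
  field_simp
end

section
/- Let H be an undirected weighted graph and let S \subseteq V be partitioned into S_1 and S_2. If 2 w_H(S_1, S_2) \le c \cdot (w_H(S_1, \bar{S_1}) + w_H(S_2, \bar{S_2})) for some constant c < 1, then \phi_H(S) \ge (1-c) \cdot min{\phi_H(S_1), \phi_H(S_2)}. -/
open Finset

/-- Total weight of edges between two vertex sets. -/
def cutW {V : Type*} (w : V → V → ℝ) (X Y : Finset V) : ℝ :=
  ∑ u ∈ X, ∑ v ∈ Y, w u v

/-- Volume of a vertex set: sum of weighted degrees. -/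
def volW {V : Type*} [Fintype V] (w : V → V → ℝ) (S : Finset V) : ℝ :=
  ∑ u ∈ S, ∑ v, w u v

/-- Conductance of a vertex set. -/
noncomputable def phiW {V : Type*} [Fintype V] [DecidableEq V]
    (w : V → V → ℝ) (S : Finset V) : ℝ :=
  cutW w S Sᶜ / volW w S

lemma cutW_nonneg {V : Type*} (w : V → V → ℝ) (hnn : ∀ u v, 0 ≤ w u v)
    (X Y : Finset V) : 0 ≤ cutW w X Y :=
  Finset.sum_nonneg fun u _ => Finset.sum_nonneg fun v _ => hnn u v

lemma cutW_union_left {V : Type*} [DecidableEq V] (w : V → V → ℝ)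
    {X Y : Finset V} (h : Disjoint X Y) (Z : Finset V) :
    cutW w (X ∪ Y) Z = cutW w X Z + cutW w Y Z := by
  simp [cutW, Finset.sum_union h]

lemma cutW_union_right {V : Type*} [DecidableEq V] (w : V → V → ℝ)
    (X : Finset V) {Y Z : Finset V} (h : Disjoint Y Z) :
    cutW w X (Y ∪ Z) = cutW w X Y + cutW w X Z := by
  simp [cutW, Finset.sum_union h, Finset.sum_add_distrib]

lemma cutW_comm {V : Type*} (w : V → V → ℝ) (hsym : ∀ u v, w u v = w v u)
    (X Y : Finset V) : cutW w X Y = cutW w Y X := by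
  rw [cutW, Finset.sum_comm]
  exact Finset.sum_congr rfl fun v _ => Finset.sum_congr rfl fun u _ => hsym u v

/-- If `S` is partitioned into `S₁` and `S₂` and
`2 w_H(S₁,S₂) ≤ c (w_H(S₁,∂S₁) + w_H(S₂,∂S₂))` for a constant `c < 1`, then
`φ_H(S) ≥ (1-c) · min{φ_H(S₁), φ_H(S₂)}`. -/
theorem conductance_union_lower_bound
    {V : Type*} [Fintype V] [DecidableEq V]
    (w : V → V → ℝ) (hsym : ∀ u v, w u v = w v u) (hnn : ∀ u v, 0 ≤ w u v)
    (S₁ S₂ : Finset V) (hdisj : Disjoint S₁ S₂)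
    (hv1 : 0 < volW w S₁) (hv2 : 0 < volW w S₂)
    (c : ℝ) (hc : c < 1)
    (h : 2 * cutW w S₁ S₂ ≤ c * (cutW w S₁ S₁ᶜ + cutW w S₂ S₂ᶜ)) :
    (1 - c) * min (phiW w S₁) (phiW w S₂) ≤ phiW w (S₁ ∪ S₂) := by
  set S := S₁ ∪ S₂ with hS
  -- complement decompositions
  have hc1 : S₁ᶜ = Sᶜ ∪ S₂ := by
    ext x
    simp only [hS, Finset.mem_compl, Finset.mem_union]
    constructor
    · intro hx
      by_cases h2 : x ∈ S₂
      · exact Or.inr h2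
      · exact Or.inl (by tauto)
    · rintro (hx | hx)
      · tauto
      · exact fun hx1 => (Finset.disjoint_left.mp hdisj hx1) hx
  have hc2 : S₂ᶜ = Sᶜ ∪ S₁ := by
    ext x
    simp only [hS, Finset.mem_compl, Finset.mem_union]
    constructor
    · intro hx
      by_cases h1 : x ∈ S₁
      · exact Or.inr h1
      · exact Or.inl (by tauto)
    · rintro (hx | hx)
      · tauto
      · exact fun hx2 => (Finset.disjoint_left.mp hdisj hx) hx2
  have hd1 : Disjoint Sᶜ S₂ := by
    rw [Finset.disjoint_left]
    intro a ha ha2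
    exact (Finset.mem_compl.mp ha) (Finset.mem_union_right _ ha2)
  have hd2 : Disjoint Sᶜ S₁ := by
    rw [Finset.disjoint_left]
    intro a ha ha1
    exact (Finset.mem_compl.mp ha) (Finset.mem_union_left _ ha1)
  have e1 : cutW w S₁ S₁ᶜ = cutW w S₁ Sᶜ + cutW w S₁ S₂ := by
    rw [hc1, cutW_union_right w _ hd1]
  have e2 : cutW w S₂ S₂ᶜ = cutW w S₂ Sᶜ + cutW w S₁ S₂ := by
    rw [hc2, cutW_union_right w _ hd2, cutW_comm w hsym S₂ S₁]
  have eS : cutW w S Sᶜ = cutW w S₁ Sᶜ + cutW w S₂ Sᶜ := cutW_union_left w hdisj _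
  have evol : volW w S = volW w S₁ + volW w S₂ := by
    simp [volW, hS, Finset.sum_union hdisj]
  have hvS : 0 < volW w S := by rw [evol]; linarith
  -- min bound
  set m := min (phiW w S₁) (phiW w S₂) with hm
  have hm1 : m * volW w S₁ ≤ cutW w S₁ S₁ᶜ := by
    have : m ≤ phiW w S₁ := min_le_left _ _
    rw [phiW, le_div_iff₀ hv1] at this
    linarith
  have hm2 : m * volW w S₂ ≤ cutW w S₂ S₂ᶜ := by
    have : m ≤ phiW w S₂ := min_le_right _ _
    rw [phiW, le_div_iff₀ hv2] at this
    linarith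
  rw [phiW, le_div_iff₀ hvS, evol]
  nlinarith [cutW_nonneg w hnn S₁ S₂, cutW_nonneg w hnn S₁ Sᶜ, cutW_nonneg w hnn S₂ Sᶜ,
    sub_pos.mpr hc, mul_pos (sub_pos.mpr hc) hv1]
end
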